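/- For integer n ≥ 2 and all θ ∈ ℝ, with z = e^{iθ}, Re[(z + ((n-1)/2) z̄ⁿ)/(z - ((n-1)/(2n)) z̄ⁿ)] ≥ n(3-n)/(3n-1). In particular the left side is nonnegative for all θ when n = 2 or n = 3. -/

import Mathlib

lemma key18 (N c : ℝ) (hN : 2 ≤ N) (hc1 : -1 ≤ c) (hc2 : c ≤ 1) :
    N*(3-N)/(3*N-1) * (1 + ((N-1)/(2*N))^2 - 2*((N-1)/(2*N))*c)
      ≤ 1 - ((N-1)/2)*((N-1)/(2*N)) + ((N-1)/2 - (N-1)/(2*N))*c := by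
  have h3 : (0:ℝ) < 3*N-1 := by linarith
  have hN0 : (0:ℝ) < N := by linarith
  rw [div_mul_eq_mul_div, div_le_iff₀ h3]
  have h4 : (0:ℝ) < 4*N^2 := by positivity
  rw [← mul_le_mul_iff_of_pos_right h4]
  have lhs_eq : N*(3-N) * (1 + ((N-1)/(2*N))^2 - 2*((N-1)/(2*N))*c) * (4*N^2)
      = N*(3-N) * (4*N^2 + (N-1)^2 - 4*N*(N-1)*c) := by field_simp; ring
  have rhs_eq : (1 - ((N-1)/2)*((N-1)/(2*N)) + ((N-1)/2 - (N-1)/(2*N))*c) * (3*N-1) * (4*N^2)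
      = (4*N^2 - N*(N-1)^2 + 2*N*(N-1)^2*c) * (3*N-1) := by field_simp; ring
  rw [lhs_eq, rhs_eq]
  nlinarith [mul_nonneg (mul_nonneg (mul_nonneg (by linarith : (0:ℝ) ≤ 1+c) (by linarith : (0:ℝ) ≤ N-1)) (sq_nonneg (N+1))) hN0.le]

lemma re18 (n : ℕ) (θ : ℝ) :
    ((Complex.exp (Complex.I * θ)
          + (((n : ℂ) - 1) / 2) * ((starRingEnd ℂ) (Complex.exp (Complex.I * θ))) ^ n) /
        (Complex.exp (Complex.I * θ)
          - (((n : ℂ) - 1) / (2 * n)) * ((starRingEnd ℂ) (Complex.exp (Complex.I * θ))) ^ n)).re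
      = ((Real.cos θ + ((n:ℝ)-1)/2 * Real.cos (n*θ)) * (Real.cos θ - ((n:ℝ)-1)/(2*n) * Real.cos (n*θ))
        + (Real.sin θ - ((n:ℝ)-1)/2 * Real.sin (n*θ)) * (Real.sin θ + ((n:ℝ)-1)/(2*n) * Real.sin (n*θ)))
        / ((Real.cos θ - ((n:ℝ)-1)/(2*n) * Real.cos (n*θ))^2 + (Real.sin θ + ((n:ℝ)-1)/(2*n) * Real.sin (n*θ))^2) := by
  have e1 : Complex.exp (Complex.I * θ) = Complex.ofReal (Real.cos θ) + Complex.ofReal (Real.sin θ) * Complex.I := by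
    rw [mul_comm, Complex.exp_mul_I]
    push_cast [Complex.ofReal_cos, Complex.ofReal_sin]
    ring
  have e2 : ((starRingEnd ℂ) (Complex.exp (Complex.I * θ))) ^ n
      = Complex.ofReal (Real.cos (n*θ)) - Complex.ofReal (Real.sin (n*θ)) * Complex.I := by
    rw [← Complex.exp_conj]
    have h : (starRingEnd ℂ) (Complex.I * θ) = (↑(-θ):ℂ) * Complex.I := by
      simp [Complex.conj_I]; ring
    rw [h, ← Complex.exp_nat_mul]
    have h2 : (n:ℂ) * ((↑(-θ):ℂ) * Complex.I) = (↑(-(n*θ):ℝ):ℂ) * Complex.I := by push_cast; ring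
    rw [h2, Complex.exp_mul_I]
    push_cast [Complex.ofReal_cos, Complex.ofReal_sin, Real.cos_neg, Real.sin_neg]
    simp [Complex.cos_neg, Complex.sin_neg]
    ring
  have e3 : (((n : ℂ) - 1) / 2) = (↑(((n:ℝ)-1)/2) : ℂ) := by push_cast; ring
  have e4 : (((n : ℂ) - 1) / (2*n)) = (↑(((n:ℝ)-1)/(2*(n:ℝ))) : ℂ) := by push_cast; ring
  rw [e2, e1, e3, e4]
  rw [Complex.div_re]
  simp only [Complex.normSq_apply, Complex.add_re, Complex.add_im, Complex.sub_re, Complex.sub_im,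
    Complex.mul_re, Complex.mul_im, Complex.I_re, Complex.I_im, Complex.ofReal_re, Complex.ofReal_im]
  ring

theorem stmt_18 (n : ℕ) (hn : 2 ≤ n) (θ : ℝ) :
    ((Complex.exp (Complex.I * θ)
          + (((n : ℂ) - 1) / 2) * ((starRingEnd ℂ) (Complex.exp (Complex.I * θ))) ^ n) /
        (Complex.exp (Complex.I * θ)
          - (((n : ℂ) - 1) / (2 * n)) * ((starRingEnd ℂ) (Complex.exp (Complex.I * θ))) ^ n)).re
      ≥ (n : ℝ) * (3 - n) / (3 * n - 1) ∧
    ((n = 2 ∨ n = 3) →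
      0 ≤ ((Complex.exp (Complex.I * θ)
          + (((n : ℂ) - 1) / 2) * ((starRingEnd ℂ) (Complex.exp (Complex.I * θ))) ^ n) /
        (Complex.exp (Complex.I * θ)
          - (((n : ℂ) - 1) / (2 * n)) * ((starRingEnd ℂ) (Complex.exp (Complex.I * θ))) ^ n)).re) := by
  have hN : (2:ℝ) ≤ (n:ℝ) := by exact_mod_cast hn
  set N : ℝ := (n:ℝ) with hNdef
  set u := Real.cos θ
  set v := Real.sin θ
  set p := Real.cos (n*θ)
  set q := Real.sin (n*θ)
  have h1 : u^2 + v^2 = 1 := by rw [add_comm]; exact Real.sin_sq_add_cos_sq θ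
  have h2 : p^2 + q^2 = 1 := by rw [add_comm]; exact Real.sin_sq_add_cos_sq _
  set c := u*p - v*q with hcdef
  have hcc : c = Real.cos (θ + n*θ) := (Real.cos_add θ (n*θ)).symm
  have hc1 : -1 ≤ c := by rw [hcc]; exact Real.neg_one_le_cos _
  have hc2 : c ≤ 1 := by rw [hcc]; exact Real.cos_le_one _
  have hX : (u + (N-1)/2 * p) * (u - (N-1)/(2*N) * p)
        + (v - (N-1)/2 * q) * (v + (N-1)/(2*N) * q)
      = 1 - ((N-1)/2)*((N-1)/(2*N)) + ((N-1)/2 - (N-1)/(2*N))*c := by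
    rw [hcdef]
    linear_combination h1 - ((N-1)/2)*((N-1)/(2*N))*h2
  have hd2 : (u - (N-1)/(2*N) * p)^2 + (v + (N-1)/(2*N) * q)^2
      = 1 + ((N-1)/(2*N))^2 - 2*((N-1)/(2*N))*c := by
    rw [hcdef]
    linear_combination h1 + ((N-1)/(2*N))^2*h2
  have hB0 : (0:ℝ) < (N-1)/(2*N) := by
    apply div_pos <;> linarith
  have hB1 : (N-1)/(2*N) < 1 := by
    rw [div_lt_one (by linarith)]; linarith
  have hd : (0:ℝ) < (u - (N-1)/(2*N) * p)^2 + (v + (N-1)/(2*N) * q)^2 := by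
    rw [hd2]
    nlinarith [mul_pos (sub_pos.2 hB1) (sub_pos.2 hB1), mul_nonneg hB0.le (sub_nonneg.2 hc2)]
  have main : ((Complex.exp (Complex.I * θ)
          + (((n : ℂ) - 1) / 2) * ((starRingEnd ℂ) (Complex.exp (Complex.I * θ))) ^ n) /
        (Complex.exp (Complex.I * θ)
          - (((n : ℂ) - 1) / (2 * n)) * ((starRingEnd ℂ) (Complex.exp (Complex.I * θ))) ^ n)).re
      ≥ N * (3 - N) / (3 * N - 1) := by
    rw [re18 n θ]
    rw [ge_iff_le, le_div_iff₀ hd, hd2, hX]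
    exact key18 N c hN hc1 hc2
  refine ⟨main, ?_⟩
  rintro (rfl | rfl) <;> [skip; skip] <;>
  · refine le_trans ?_ main
    norm_num [hNdef]
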